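/- Let 0 < ρ < 1, let A = {x ∈ ℝ² : ρ < ‖x‖ < 1}, and let ν > 0. Let α₁, α₂ : (0,∞) → ℝ be continuously differentiable and let s : (0,∞) × [ρ,1] → ℝ be such that u(t,x) := s(t,‖x‖)·x^⊥, together with its first t-derivative and first, second, and third x-derivatives, is continuous on (0,∞) × Ā, u satisfies ∂_t u = ν·Δu on (0,∞) × A, and u(t,x) = (α₁(t)/(2π))·x^⊥ for ‖x‖ = 1 and u(t,x) = (α₂(t)/(2π))·x^⊥ for ‖x‖ = ρ. Let ω := rot u. Then for every t > 0: (x/‖x‖)·∇ω(t,x) = ‖x‖·α₁'(t)/(2πν) when ‖x‖ = 1, and (x/‖x‖)·∇ω(t,x) = ‖x‖·α₂'(t)/(2πν) when ‖x‖ = ρ. -/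

import Mathlib

open Metric Set MeasureTheory Filter Real
open scoped RealInnerProductSpace MeasureTheory

set_option maxSynthPendingDepth 3
set_option synthInstance.maxHeartbeats 1000000
set_option maxHeartbeats 1000000

noncomputable section

/-- The plane `ℝ²`, as a Euclidean space. -/
abbrev E2 := EuclideanSpace ℝ (Fin 2)

/-- Counterclockwise rotation of `x` by `90°`:  `x^⊥ = (-x₂, x₁)`. -/
def perp (x : E2) : E2 := WithLp.toLp 2 ![-(x 1), x 0]

open scoped Topology

lemma perp_apply0 (x : E2) : perp x 0 = -(x 1) := rfl
lemma perp_apply1 (x : E2) : perp x 1 = x 0 := rfl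

lemma e2_ext {a b : E2} (h0 : a 0 = b 0) (h1 : a 1 = b 1) : a = b := by
  ext i; fin_cases i <;> assumption

lemma e2_inner (a b : E2) : ⟪a, b⟫ = a 0 * b 0 + a 1 * b 1 := by
  simp [PiLp.inner_apply, Fin.sum_univ_two, RCLike.inner_apply, mul_comm]

lemma e2_norm_sq (a : E2) : ‖a‖^2 = a 0 ^2 + a 1 ^2 := by
  rw [← real_inner_self_eq_norm_sq, e2_inner]; ring

lemma perp_smul (c : ℝ) (x : E2) : perp (c • x) = c • perp x := by
  apply e2_ext <;> simp [perp_apply0, perp_apply1, mul_comm]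

lemma perp_add (x y : E2) : perp (x + y) = perp x + perp y := by
  apply e2_ext <;> (simp [perp_apply0, perp_apply1]; try ring)

lemma perp_perp (x : E2) : perp (perp x) = -x := by
  apply e2_ext <;> simp [perp_apply0, perp_apply1]

lemma inner_perp_self (x : E2) : ⟪perp x, x⟫ = 0 := by
  rw [e2_inner, perp_apply0, perp_apply1]; ring

lemma inner_perp_perp (a b : E2) : ⟪perp a, perp b⟫ = ⟪a, b⟫ := by
  rw [e2_inner, e2_inner, perp_apply0, perp_apply1, perp_apply0, perp_apply1]; ring

lemma norm_perp (x : E2) : ‖perp x‖ = ‖x‖ := by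
  have := e2_norm_sq (perp x)
  rw [perp_apply0, perp_apply1] at this
  have h2 : ‖perp x‖^2 = ‖x‖^2 := by rw [this, e2_norm_sq]; ring
  nlinarith [norm_nonneg (perp x), norm_nonneg x]

/-- rotation by angle θ -/
def Rot (θ : ℝ) (x : E2) : E2 := Real.cos θ • x + Real.sin θ • perp x

lemma Rot_zero (x : E2) : Rot 0 x = x := by simp [Rot]

lemma Rot_smul (θ c : ℝ) (x : E2) : Rot θ (c • x) = c • Rot θ x := by
  simp only [Rot, perp_smul, smul_smul, smul_add]
  module

lemma perp_Rot (θ : ℝ) (x : E2) : perp (Rot θ x) = Rot θ (perp x) := by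
  simp [Rot, perp_add, perp_smul, perp_perp]

lemma norm_Rot (θ : ℝ) (x : E2) : ‖Rot θ x‖ = ‖x‖ := by
  have h : ‖Rot θ x‖^2 = ‖x‖^2 := by
    rw [← real_inner_self_eq_norm_sq, ← real_inner_self_eq_norm_sq, Rot]
    rw [inner_add_add_self]
    simp only [real_inner_smul_left, real_inner_smul_right, inner_perp_perp]
    have h1 : ⟪x, perp x⟫ = 0 := by rw [real_inner_comm, inner_perp_self]
    have h2 : ⟪perp x, x⟫ = 0 := inner_perp_self x
    rw [h1, h2, real_inner_self_eq_norm_sq]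
    have := Real.sin_sq_add_cos_sq θ
    nlinarith [real_inner_self_eq_norm_sq x]
  nlinarith [norm_nonneg (Rot θ x), norm_nonneg x]

lemma hasDerivAt_Rot (y : E2) : HasDerivAt (fun θ => Rot θ y) (perp y) 0 := by
  have h := ((Real.hasDerivAt_cos 0).smul_const y).add ((Real.hasDerivAt_sin 0).smul_const (perp y))
  simp only [Real.sin_zero, Real.cos_zero, neg_zero, zero_smul, one_smul, zero_add] at h
  exact h

lemma e2_decomp (y : E2) : y = y 0 • (EuclideanSpace.single 0 (1:ℝ)) + y 1 • (EuclideanSpace.single 1 (1:ℝ)) := by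
  apply e2_ext <;> simp [EuclideanSpace.single_apply]

lemma mem_S_iff (ρ : ℝ) (y : E2) :
    y ∈ closedBall (0:E2) 1 \ ball 0 ρ ↔ ρ ≤ ‖y‖ ∧ ‖y‖ ≤ 1 := by
  simp [mem_closedBall, mem_ball, dist_zero_right, not_lt, and_comm]

lemma mem_A_iff (ρ : ℝ) (y : E2) :
    y ∈ ball (0:E2) 1 \ closedBall 0 ρ ↔ ρ < ‖y‖ ∧ ‖y‖ < 1 := by
  simp [mem_closedBall, mem_ball, dist_zero_right, not_le, and_comm]

lemma key (ρ ν : ℝ) (hρ : 0 < ρ) (hρ1 : ρ < 1) (hν : 0 < ν)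
    (α α' : ℝ → ℝ)
    (hα : ∀ t ∈ Ioi (0:ℝ), HasDerivAt α (α' t) t)
    (s : ℝ → ℝ → ℝ) (u : ℝ → E2 → E2)
    (hudef : ∀ t ∈ Ioi (0:ℝ), ∀ x ∈ closedBall (0:E2) 1 \ ball 0 ρ,
      u t x = s t ‖x‖ • perp x)
    (ut : ℝ → E2 → E2)
    (Du : ℝ → E2 → (E2 →L[ℝ] E2)) (D2u : ℝ → E2 → (E2 →L[ℝ] E2 →L[ℝ] E2))
    (hut : ∀ t ∈ Ioi (0:ℝ), ∀ x ∈ closedBall (0:E2) 1 \ ball 0 ρ,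
      HasDerivAt (fun τ => u τ x) (ut t x) t)
    (hutc : ContinuousOn (fun p : ℝ × E2 => ut p.1 p.2)
      (Ioi 0 ×ˢ (closedBall 0 1 \ ball 0 ρ)))
    (hDu : ∀ t ∈ Ioi (0:ℝ), ∀ x ∈ closedBall (0:E2) 1 \ ball 0 ρ,
      HasFDerivWithinAt (u t) (Du t x) (closedBall 0 1 \ ball 0 ρ) x)
    (hD2u : ∀ t ∈ Ioi (0:ℝ), ∀ x ∈ closedBall (0:E2) 1 \ ball 0 ρ,
      HasFDerivWithinAt (Du t) (D2u t x) (closedBall 0 1 \ ball 0 ρ) x)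
    (hD2uc : ContinuousOn (fun p : ℝ × E2 => D2u p.1 p.2)
      (Ioi 0 ×ˢ (closedBall 0 1 \ ball 0 ρ)))
    (hheat : ∀ t ∈ Ioi (0:ℝ), ∀ x ∈ ball (0:E2) 1 \ closedBall 0 ρ,
      ut t x = ν • (D2u t x (EuclideanSpace.single 0 1) (EuclideanSpace.single 0 1)
        + D2u t x (EuclideanSpace.single 1 1) (EuclideanSpace.single 1 1)))
    (r : ℝ) (hrl : ρ ≤ r) (hru : r ≤ 1)
    (hb : ∀ t ∈ Ioi (0:ℝ), ∀ x : E2, ‖x‖ = r → u t x = (α t / (2 * π)) • perp x)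
    (t : ℝ) (ht : t ∈ Ioi (0:ℝ)) (x : E2) (hx : ‖x‖ = r) :
    D2u t x (‖x‖⁻¹ • x) (EuclideanSpace.single 0 1) 1
      - D2u t x (‖x‖⁻¹ • x) (EuclideanSpace.single 1 1) 0
    = ‖x‖ * α' t / (2 * π * ν) := by
  have ht' : (0:ℝ) < t := ht
  have hr0 : 0 < r := lt_of_lt_of_le hρ hrl
  set S : Set E2 := closedBall (0:E2) 1 \ ball 0 ρ with hS
  set A : Set E2 := ball (0:E2) 1 \ closedBall 0 ρ with hA
  set e₀ : E2 := EuclideanSpace.single 0 (1:ℝ) with he₀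
  set e₁ : E2 := EuclideanSpace.single 1 (1:ℝ) with he₁
  have hAS : A ⊆ S := by
    intro y hy
    rw [mem_A_iff] at hy
    exact (mem_S_iff ρ y).mpr ⟨hy.1.le, hy.2.le⟩
  have hAopen : IsOpen A := isOpen_ball.sdiff isClosed_closedBall
  have hxS : x ∈ S := (mem_S_iff ρ x).mpr ⟨hx ▸ hrl, hx ▸ hru⟩
  -- time derivative at the boundary
  have hutx : ut t x = (α' t / (2 * π)) • perp x := by
    have h1 : HasDerivAt (fun τ => u τ x) (ut t x) t := hut t ht x hxS
    have h2 : HasDerivAt (fun τ => (α τ / (2 * π)) • perp x)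
        ((α' t / (2 * π)) • perp x) t := ((hα t ht).div_const _).smul_const _
    have heqv : (fun τ => (α τ / (2 * π)) • perp x) =ᶠ[𝓝 t] (fun τ => u τ x) := by
      filter_upwards [isOpen_Ioi.mem_nhds ht'] with τ hτ
      exact (hb τ hτ x hx).symm
    exact ((h2.congr_of_eventuallyEq heqv.symm).unique h1).symm ▸ rfl
  -- x is in the closure of the open annulus A
  have hxclA : x ∈ closure A := by
    have htt : Tendsto (fun τ : ℝ => (τ / r) • x) (𝓝[Ioo ρ 1] r) (𝓝 x) := by
      have hc : ContinuousWithinAt (fun τ : ℝ => (τ / r) • x) (Ioo ρ 1) r :=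
        ((continuous_id.div_const r).smul continuous_const).continuousWithinAt
      have hc' : Tendsto (fun τ : ℝ => (τ / r) • x) (𝓝[Ioo ρ 1] r) (𝓝 ((r / r) • x)) := hc
      rw [div_self hr0.ne', one_smul] at hc'
      exact hc'
    have hne : (𝓝[Ioo ρ 1] r).NeBot := by
      refine mem_closure_iff_nhdsWithin_neBot.mp ?_
      rw [closure_Ioo hρ1.ne]
      exact ⟨hrl, hru⟩
    refine mem_closure_of_tendsto htt ?_
    filter_upwards [self_mem_nhdsWithin] with τ hτ
    rw [mem_A_iff]
    have hτ0 : 0 < τ := lt_trans hρ hτ.1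
    have : ‖(τ / r) • x‖ = τ := by
      rw [norm_smul, hx, Real.norm_eq_abs, abs_div, abs_of_pos hτ0, abs_of_pos hr0]
      field_simp
    rw [this]; exact ⟨hτ.1, hτ.2⟩
  have hneA : (𝓝[A] x).NeBot := mem_closure_iff_nhdsWithin_neBot.mp hxclA
  -- continuity within A of various fields, and extension of the heat equation
  have hcontut : ContinuousOn (fun y => ut t y) S := by
    have : ContinuousOn (fun y : E2 => ((t, y) : ℝ × E2)) S :=
      (continuous_const.prodMk continuous_id).continuousOn
    exact hutc.comp this (fun y hy => ⟨ht, hy⟩)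
  have hcontD2 : ContinuousOn (fun y => D2u t y) S := by
    have : ContinuousOn (fun y : E2 => ((t, y) : ℝ × E2)) S :=
      (continuous_const.prodMk continuous_id).continuousOn
    exact hD2uc.comp this (fun y hy => ⟨ht, hy⟩)
  have hlap : ut t x = ν • (D2u t x e₀ e₀ + D2u t x e₁ e₁) := by
    have hF : Tendsto (fun y => ut t y) (𝓝[A] x) (𝓝 (ut t x)) :=
      ((hcontut x hxS).mono hAS).tendsto
    have hG : Tendsto (fun y => ν • (D2u t y e₀ e₀ + D2u t y e₁ e₁)) (𝓝[A] x)
        (𝓝 (ν • (D2u t x e₀ e₀ + D2u t x e₁ e₁))) := by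
      have h2 : ContinuousOn (fun y => ν • (D2u t y e₀ e₀ + D2u t y e₁ e₁)) S := by
        refine ContinuousOn.const_smul (g := fun y => D2u t y e₀ e₀ + D2u t y e₁ e₁) ?_ ν
        exact ((hcontD2.clm_apply continuousOn_const).clm_apply continuousOn_const).add
          ((hcontD2.clm_apply continuousOn_const).clm_apply continuousOn_const)
      exact ((h2 x hxS).mono hAS).tendsto
    have hFG : (fun y => ut t y) =ᶠ[𝓝[A] x] (fun y => ν • (D2u t y e₀ e₀ + D2u t y e₁ e₁)) := by
      filter_upwards [self_mem_nhdsWithin] with y hy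
      exact hheat t ht y hy
    exact tendsto_nhds_unique (hF.congr' hFG) hG
  have hlap2 : D2u t x e₀ e₀ + D2u t x e₁ e₁ = (α' t / (2 * π * ν)) • perp x := by
    have h1 : ν • (D2u t x e₀ e₀ + D2u t x e₁ e₁) = (α' t / (2 * π)) • perp x := by
      rw [← hlap, hutx]
    have h2 := congrArg (fun v => ν⁻¹ • v) h1
    simp only [smul_smul, inv_mul_cancel₀ hν.ne', one_smul] at h2
    rw [h2, inv_mul_eq_div, div_div]
  -- symmetry of the second derivative at the boundary point
  have hsymx : D2u t x e₀ e₁ = D2u t x e₁ e₀ := by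
    have hsymA : ∀ y ∈ A, D2u t y e₀ e₁ = D2u t y e₁ e₀ := by
      intro y hy
      have hSnhds : S ∈ 𝓝 y := mem_nhds_iff.mpr ⟨A, hAS, hAopen, hy⟩
      have hev : ∀ᶠ z in 𝓝 y, HasFDerivAt (u t) (Du t z) z := by
        filter_upwards [hAopen.mem_nhds hy] with z hz
        exact (hDu t ht z (hAS hz)).hasFDerivAt (mem_nhds_iff.mpr ⟨A, hAS, hAopen, hz⟩)
      have h2 : HasFDerivAt (Du t) (D2u t y) y := (hD2u t ht y (hAS hy)).hasFDerivAt hSnhds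
      exact second_derivative_symmetric_of_eventually hev h2 e₀ e₁
    have hH : ContinuousOn (fun y => D2u t y e₀ e₁ - D2u t y e₁ e₀) S :=
      ((hcontD2.clm_apply continuousOn_const).clm_apply continuousOn_const).sub
        ((hcontD2.clm_apply continuousOn_const).clm_apply continuousOn_const)
    have hF : Tendsto (fun y => D2u t y e₀ e₁ - D2u t y e₁ e₀) (𝓝[A] x)
        (𝓝 (D2u t x e₀ e₁ - D2u t x e₁ e₀)) := ((hH x hxS).mono hAS).tendsto
    have hzero : Tendsto (fun y => D2u t y e₀ e₁ - D2u t y e₁ e₀) (𝓝[A] x) (𝓝 0) := by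
      refine Tendsto.congr' ?_ (tendsto_const_nhds :
        Tendsto (fun _ : E2 => (0:E2)) (𝓝[A] x) (𝓝 0))
      filter_upwards [self_mem_nhdsWithin] with y hy
      rw [hsymA y hy, sub_self]
    exact sub_eq_zero.mp (tendsto_nhds_unique hF hzero)
  -- tangency and equivariance
  have htan : ∀ z ∈ S, ⟪u t z, z⟫ = 0 := by
    intro z hz
    rw [hudef t ht z hz, real_inner_smul_left, inner_perp_self, mul_zero]
  have hRotmem : ∀ (θ : ℝ) (y : E2), y ∈ S → Rot θ y ∈ S := by
    intro θ y hy
    rw [mem_S_iff] at hy ⊢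
    rw [norm_Rot]; exact hy
  have hequiv : ∀ y ∈ S, ∀ θ : ℝ, u t (Rot θ y) = Rot θ (u t y) := by
    intro y hy θ
    rw [hudef t ht _ (hRotmem θ y hy), hudef t ht y hy, norm_Rot, perp_Rot, Rot_smul]
  have hDuperp : ∀ y ∈ S, Du t y (perp y) = perp (u t y) := by
    intro y hy
    have h1 : HasDerivAt (fun θ => u t (Rot θ y)) (Du t y (perp y)) 0 := by
      have hcurve : HasDerivAt (fun θ => Rot θ y) (perp y) 0 := hasDerivAt_Rot y
      have hd : HasFDerivWithinAt (u t) (Du t y) S (Rot 0 y) := by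
        rw [Rot_zero]; exact hDu t ht y hy
      have hcomp := hd.comp_hasDerivWithinAt (0:ℝ)
        (hcurve.hasDerivWithinAt (s := univ)) (fun θ _ => hRotmem θ y hy)
      rw [hasDerivWithinAt_univ] at hcomp
      exact hcomp
    have h2 : HasDerivAt (fun θ => u t (Rot θ y)) (perp (u t y)) 0 := by
      have heqf : (fun θ => u t (Rot θ y)) = fun θ => Rot θ (u t y) :=
        funext (hequiv y hy)
      rw [heqf]; exact hasDerivAt_Rot (u t y)
    exact h1.unique h2
  -- radial tangency derivative
  have hDurad : ∀ y ∈ S, ⟪Du t y y, y⟫ = 0 := by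
    intro y hy
    have hy' := (mem_S_iff ρ y).mp hy
    have hn0 : 0 < ‖y‖ := lt_of_lt_of_le hρ hy'.1
    set w : E2 := ‖y‖⁻¹ • y with hw
    have hwnorm : ‖w‖ = 1 := by
      rw [hw, norm_smul, norm_inv, norm_norm, inv_mul_cancel₀ hn0.ne']
    have hmem : ∀ τ ∈ Icc ρ 1, τ • w ∈ S := by
      intro τ hτ
      rw [mem_S_iff, norm_smul, hwnorm, mul_one, Real.norm_eq_abs,
        abs_of_pos (lt_of_lt_of_le hρ hτ.1)]
      exact hτ
    have hyw : ‖y‖ • w = y := smul_inv_smul₀ hn0.ne' y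
    have hγ : HasDerivWithinAt (fun τ : ℝ => τ • w) w (Icc ρ 1) ‖y‖ := by
      simpa using ((hasDerivAt_id ‖y‖).smul_const w).hasDerivWithinAt
    have hfd : HasDerivWithinAt (fun τ : ℝ => u t (τ • w)) (Du t y w) (Icc ρ 1) ‖y‖ := by
      have hd : HasFDerivWithinAt (u t) (Du t y) S (‖y‖ • w) := by
        rw [hyw]; exact hDu t ht y hy
      have hcomp := hd.comp_hasDerivWithinAt ‖y‖ hγ (fun τ hτ => hmem τ hτ)
      exact hcomp
    have hψ := HasDerivWithinAt.inner ℝ hfd hγ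
    have hzero : HasDerivWithinAt (fun τ : ℝ => ⟪u t (τ • w), τ • w⟫) 0 (Icc ρ 1) ‖y‖ := by
      refine (hasDerivWithinAt_const ‖y‖ (Icc ρ 1) (0:ℝ)).congr ?_ ?_
      · intro τ hτ; exact htan _ (hmem τ hτ)
      · rw [hyw]; exact htan y hy
    have huniq := (uniqueDiffOn_Icc hρ1 ‖y‖ hy').eq_deriv _ hψ hzero
    rw [hyw] at huniq
    have ht1 : ⟪u t y, w⟫ = 0 := by
      rw [hw, real_inner_smul_right, htan y hy, mul_zero]
    have ht2 : Du t y w = ‖y‖⁻¹ • Du t y y := by rw [hw, _root_.map_smul]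
    rw [ht1, ht2, real_inner_smul_left, zero_add] at huniq
    have := mul_eq_zero.mp huniq
    rcases this with h | h
    · exact absurd h (by positivity)
    · exact h
  -- divergence vanishes on S
  have hdiv : ∀ y ∈ S, Du t y e₀ 0 + Du t y e₁ 1 = 0 := by
    intro y hy
    have hy' := (mem_S_iff ρ y).mp hy
    have hn0 : 0 < ‖y‖ := lt_of_lt_of_le hρ hy'.1
    have ha : ⟪Du t y y, y⟫ = 0 := hDurad y hy
    have hb2 : ⟪Du t y (perp y), perp y⟫ = 0 := by
      rw [hDuperp y hy, inner_perp_perp]; exact htan y hy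
    have hdy := congrArg (Du t y) (e2_decomp y)
    rw [map_add, _root_.map_smul, _root_.map_smul] at hdy
    have hdp := congrArg (Du t y) (e2_decomp (perp y))
    rw [map_add, _root_.map_smul, _root_.map_smul, perp_apply0, perp_apply1] at hdp
    rw [hdy] at ha
    rw [hdp] at hb2
    rw [e2_inner] at ha hb2
    simp only [PiLp.add_apply, PiLp.smul_apply, smul_eq_mul, perp_apply0, perp_apply1] at ha hb2
    have hnorm : y 0 ^ 2 + y 1 ^ 2 = ‖y‖ ^ 2 := (e2_norm_sq y).symm
    have hpos : 0 < y 0 ^ 2 + y 1 ^ 2 := by rw [hnorm]; positivity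
    have hsum : (y 0 ^ 2 + y 1 ^ 2) * (Du t y e₀ 0 + Du t y e₁ 1) = 0 := by
      linear_combination ha + hb2
    rcases mul_eq_zero.mp hsum with h | h
    · exact absurd h hpos.ne'
    · exact h
  -- the derivative of the divergence vanishes at x
  set L0 : (E2 →L[ℝ] E2) →L[ℝ] ℝ :=
    (EuclideanSpace.proj (0 : Fin 2)).comp (ContinuousLinearMap.apply ℝ E2 e₀) with hL0def
  set L1 : (E2 →L[ℝ] E2) →L[ℝ] ℝ :=
    (EuclideanSpace.proj (1 : Fin 2)).comp (ContinuousLinearMap.apply ℝ E2 e₁) with hL1def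
  set Lf : E2 →L[ℝ] ℝ := (L0.comp (D2u t x)) + (L1.comp (D2u t x)) with hLfdef
  have hf' : HasFDerivWithinAt (fun y => Du t y e₀ 0 + Du t y e₁ 1) Lf S x := by
    have h0 := (L0.hasFDerivAt (x := Du t x)).comp_hasFDerivWithinAt x (hD2u t ht x hxS)
    have h1 := (L1.hasFDerivAt (x := Du t x)).comp_hasFDerivWithinAt x (hD2u t ht x hxS)
    exact h0.add h1
  have hLfx : Lf x = 0 := by
    set a : ℝ := ρ / r with hadef
    set b : ℝ := 1 / r with hbdef
    have hab : a < b := by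
      rw [hadef, hbdef]
      exact div_lt_div_of_pos_right hρ1 hr0
    have h1mem : (1:ℝ) ∈ Icc a b := by
      constructor
      · rw [hadef]; exact (div_le_one hr0).mpr hrl
      · rw [hbdef, le_div_iff₀ hr0, one_mul]; exact hru
    have hmem : ∀ τ ∈ Icc a b, τ • x ∈ S := by
      intro τ hτ
      have hτ0 : 0 < τ := lt_of_lt_of_le (div_pos hρ hr0) hτ.1
      rw [mem_S_iff, norm_smul, hx, Real.norm_eq_abs, abs_of_pos hτ0]
      constructor
      · rw [hadef] at hτ; exact (div_le_iff₀ hr0).mp hτ.1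
      · rw [hbdef] at hτ
        calc τ * r ≤ (1/r) * r := by
              exact mul_le_mul_of_nonneg_right hτ.2 hr0.le
          _ = 1 := by field_simp
    have hγ : HasDerivWithinAt (fun τ : ℝ => τ • x) x (Icc a b) 1 := by
      simpa using ((hasDerivAt_id (1:ℝ)).smul_const x).hasDerivWithinAt (s := Icc a b)
    have hcomp := hf'.comp_hasDerivWithinAt_of_eq (1:ℝ) hγ (fun τ hτ => hmem τ hτ)
      (by rw [one_smul])
    have hzero : HasDerivWithinAt ((fun y => Du t y e₀ 0 + Du t y e₁ 1) ∘ fun τ : ℝ => τ • x)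
        0 (Icc a b) 1 := by
      refine (hasDerivWithinAt_const (1:ℝ) (Icc a b) (0:ℝ)).congr ?_ ?_
      · intro τ hτ; exact hdiv _ (hmem τ hτ)
      · show Du t ((1:ℝ) • x) e₀ 0 + Du t ((1:ℝ) • x) e₁ 1 = 0
        rw [one_smul]; exact hdiv x hxS
    exact (uniqueDiffOn_Icc hab 1 h1mem).eq_deriv _ hcomp hzero
  have hLfperp : Lf (perp x) = 0 := by
    have hcurve : HasDerivAt (fun θ => Rot θ x) (perp x) 0 := hasDerivAt_Rot x
    have hd : HasFDerivWithinAt (fun y => Du t y e₀ 0 + Du t y e₁ 1) Lf S (Rot 0 x) := by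
      rw [Rot_zero]; exact hf'
    have hcomp := hd.comp_hasDerivWithinAt (0:ℝ)
      (hcurve.hasDerivWithinAt (s := univ)) (fun θ _ => hRotmem θ x hxS)
    rw [hasDerivWithinAt_univ] at hcomp
    have hzero : HasDerivAt ((fun y => Du t y e₀ 0 + Du t y e₁ 1) ∘ fun θ : ℝ => Rot θ x)
        0 0 := by
      have hfz : ((fun y => Du t y e₀ 0 + Du t y e₁ 1) ∘ fun θ : ℝ => Rot θ x)
          = fun _ : ℝ => (0:ℝ) := by
        funext θ
        exact hdiv _ (hRotmem θ x hxS)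
      rw [hfz]; exact hasDerivAt_const 0 0
    exact hcomp.unique hzero
  have hx2 : x 0 ^ 2 + x 1 ^ 2 = r ^ 2 := by
    have := e2_norm_sq x
    rw [hx] at this; linarith
  have he0dec : e₀ = (x 0 / r ^ 2) • x + (-(x 1) / r ^ 2) • perp x := by
    apply e2_ext
    · simp only [PiLp.add_apply, PiLp.smul_apply, smul_eq_mul, perp_apply0, perp_apply1,
        he₀, EuclideanSpace.single_apply]
      norm_num
      field_simp
      linarith [hx2]
    · simp only [PiLp.add_apply, PiLp.smul_apply, smul_eq_mul, perp_apply0, perp_apply1,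
        he₀, EuclideanSpace.single_apply]
      norm_num
      ring
  have he1dec : e₁ = (x 1 / r ^ 2) • x + (x 0 / r ^ 2) • perp x := by
    apply e2_ext
    · simp only [PiLp.add_apply, PiLp.smul_apply, smul_eq_mul, perp_apply0, perp_apply1,
        he₁, EuclideanSpace.single_apply]
      norm_num
      ring
    · simp only [PiLp.add_apply, PiLp.smul_apply, smul_eq_mul, perp_apply0, perp_apply1,
        he₁, EuclideanSpace.single_apply]
      norm_num
      field_simp
      linarith [hx2]
  have hLfe0 : Lf e₀ = 0 := by
    rw [he0dec, map_add, _root_.map_smul, _root_.map_smul, hLfx, hLfperp]; simp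
  have hLfe1 : Lf e₁ = 0 := by
    rw [he1dec, map_add, _root_.map_smul, _root_.map_smul, hLfx, hLfperp]; simp
  have hDe0 : D2u t x e₀ e₀ 0 + D2u t x e₀ e₁ 1 = 0 := hLfe0
  have hDe1 : D2u t x e₁ e₀ 0 + D2u t x e₁ e₁ 1 = 0 := hLfe1
  -- final algebra
  set c : ℝ := α' t / (2 * π * ν) with hc
  have hD2x := congrArg (D2u t x) (e2_decomp x)
  rw [map_add, _root_.map_smul, _root_.map_smul] at hD2x
  have hlap0 := congrArg (fun v : E2 => v 0) hlap2
  have hlap1 := congrArg (fun v : E2 => v 1) hlap2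
  simp only [PiLp.add_apply, PiLp.smul_apply, smul_eq_mul, perp_apply0, perp_apply1]
    at hlap0 hlap1
  have hsym0 := congrArg (fun v : E2 => v 0) hsymx
  have hsym1 := congrArg (fun v : E2 => v 1) hsymx
  simp only [] at hsym0 hsym1
  have hmain : x 0 * D2u t x e₀ e₀ 1 + x 1 * D2u t x e₁ e₀ 1
      - (x 0 * D2u t x e₀ e₁ 0 + x 1 * D2u t x e₁ e₁ 0) = c * r ^ 2 := by
    linear_combination (x 0) * hlap1 - (x 1) * hlap0 - (x 1) * hsym1 - (x 0) * hsym0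
      + (x 1) * hDe0 - (x 0) * hDe1 + c * hx2
  rw [← he₀, ← he₁] at hD2x
  have hgoal : r⁻¹ * (x 0 * D2u t x e₀ e₀ 1 + x 1 * D2u t x e₁ e₀ 1)
      - r⁻¹ * (x 0 * D2u t x e₀ e₁ 0 + x 1 * D2u t x e₁ e₁ 0) = r * α' t / (2 * π * ν) := by
    have h2 : r⁻¹ * (x 0 * D2u t x e₀ e₀ 1 + x 1 * D2u t x e₁ e₀ 1)
        - r⁻¹ * (x 0 * D2u t x e₀ e₁ 0 + x 1 * D2u t x e₁ e₁ 0)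
        = r⁻¹ * (c * r ^ 2) := by rw [← hmain]; ring
    rw [h2, hc]
    field_simp
  rw [hx, _root_.map_smul, hD2x]
  simp only [ContinuousLinearMap.add_apply, ContinuousLinearMap.coe_smul',
    ContinuousLinearMap.smul_apply, Pi.smul_apply, PiLp.add_apply, PiLp.smul_apply,
    smul_eq_mul]
  linear_combination hgoal


/-- Boundary vorticity production for circularly symmetric heat flow on the annulus
`A = {ρ < ‖x‖ < 1}` whose boundary circles rotate with angular velocities `α₁, α₂`:
if `u(t,x) = s(t,‖x‖) • x^⊥` (with `u`, `∂_t u`, and the first, second and third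
space derivatives continuous on `(0,∞) × Ā`) solves `∂_t u = ν Δu` on `(0,∞) × A`
with `u = (α₁(t)/(2π)) • x^⊥` on `‖x‖ = 1` and `u = (α₂(t)/(2π)) • x^⊥` on `‖x‖ = ρ`,
then the radial derivative of the vorticity `ω = rot u` satisfies
`(x/‖x‖) ⬝ ∇ω(t,x) = ‖x‖ α₁'(t)/(2πν)` on `‖x‖ = 1` and
`(x/‖x‖) ⬝ ∇ω(t,x) = ‖x‖ α₂'(t)/(2πν)` on `‖x‖ = ρ`. -/
theorem stmt19 (ρ ν : ℝ) (hρ : 0 < ρ) (hρ1 : ρ < 1) (hν : 0 < ν)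
    (α₁ α₂ α₁' α₂' : ℝ → ℝ)
    (hα₁ : ∀ t ∈ Ioi (0:ℝ), HasDerivAt α₁ (α₁' t) t)
    (hα₁c : ContinuousOn α₁' (Ioi 0))
    (hα₂ : ∀ t ∈ Ioi (0:ℝ), HasDerivAt α₂ (α₂' t) t)
    (hα₂c : ContinuousOn α₂' (Ioi 0))
    (s : ℝ → ℝ → ℝ) (u : ℝ → E2 → E2)
    (hudef : ∀ t ∈ Ioi (0:ℝ), ∀ x ∈ closedBall (0:E2) 1 \ ball 0 ρ,
      u t x = s t ‖x‖ • perp x)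
    (ut : ℝ → E2 → E2)
    (Du : ℝ → E2 → (E2 →L[ℝ] E2)) (D2u : ℝ → E2 → (E2 →L[ℝ] E2 →L[ℝ] E2))
    (D3u : ℝ → E2 → (E2 →L[ℝ] E2 →L[ℝ] E2 →L[ℝ] E2))
    (hcont : ContinuousOn (fun p : ℝ × E2 => u p.1 p.2)
      (Ioi 0 ×ˢ (closedBall 0 1 \ ball 0 ρ)))
    (hut : ∀ t ∈ Ioi (0:ℝ), ∀ x ∈ closedBall (0:E2) 1 \ ball 0 ρ,
      HasDerivAt (fun τ => u τ x) (ut t x) t)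
    (hutc : ContinuousOn (fun p : ℝ × E2 => ut p.1 p.2)
      (Ioi 0 ×ˢ (closedBall 0 1 \ ball 0 ρ)))
    (hDu : ∀ t ∈ Ioi (0:ℝ), ∀ x ∈ closedBall (0:E2) 1 \ ball 0 ρ,
      HasFDerivWithinAt (u t) (Du t x) (closedBall 0 1 \ ball 0 ρ) x)
    (hDuc : ContinuousOn (fun p : ℝ × E2 => Du p.1 p.2)
      (Ioi 0 ×ˢ (closedBall 0 1 \ ball 0 ρ)))
    (hD2u : ∀ t ∈ Ioi (0:ℝ), ∀ x ∈ closedBall (0:E2) 1 \ ball 0 ρ,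
      HasFDerivWithinAt (Du t) (D2u t x) (closedBall 0 1 \ ball 0 ρ) x)
    (hD2uc : ContinuousOn (fun p : ℝ × E2 => D2u p.1 p.2)
      (Ioi 0 ×ˢ (closedBall 0 1 \ ball 0 ρ)))
    (hD3u : ∀ t ∈ Ioi (0:ℝ), ∀ x ∈ closedBall (0:E2) 1 \ ball 0 ρ,
      HasFDerivWithinAt (D2u t) (D3u t x) (closedBall 0 1 \ ball 0 ρ) x)
    (hD3uc : ContinuousOn (fun p : ℝ × E2 => D3u p.1 p.2)
      (Ioi 0 ×ˢ (closedBall 0 1 \ ball 0 ρ)))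
    (hheat : ∀ t ∈ Ioi (0:ℝ), ∀ x ∈ ball (0:E2) 1 \ closedBall 0 ρ,
      ut t x = ν • (D2u t x (EuclideanSpace.single 0 1) (EuclideanSpace.single 0 1)
        + D2u t x (EuclideanSpace.single 1 1) (EuclideanSpace.single 1 1)))
    (hb1 : ∀ t ∈ Ioi (0:ℝ), ∀ x : E2, ‖x‖ = 1 → u t x = (α₁ t / (2 * π)) • perp x)
    (hb2 : ∀ t ∈ Ioi (0:ℝ), ∀ x : E2, ‖x‖ = ρ → u t x = (α₂ t / (2 * π)) • perp x) :
    ∀ t ∈ Ioi (0:ℝ), ∀ x : E2,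
      (‖x‖ = 1 →
        D2u t x (‖x‖⁻¹ • x) (EuclideanSpace.single 0 1) 1
          - D2u t x (‖x‖⁻¹ • x) (EuclideanSpace.single 1 1) 0
        = ‖x‖ * α₁' t / (2 * π * ν))
      ∧ (‖x‖ = ρ →
        D2u t x (‖x‖⁻¹ • x) (EuclideanSpace.single 0 1) 1
          - D2u t x (‖x‖⁻¹ • x) (EuclideanSpace.single 1 1) 0
        = ‖x‖ * α₂' t / (2 * π * ν)) := by
  intro t ht x
  constructor
  · intro hx1
    exact key ρ ν hρ hρ1 hν α₁ α₁' hα₁ s u hudef ut Du D2u hut hutc hDu hD2u hD2uc hheat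
      1 hρ1.le le_rfl hb1 t ht x hx1
  · intro hxρ
    exact key ρ ν hρ hρ1 hν α₂ α₂' hα₂ s u hudef ut Du D2u hut hutc hDu hD2u hD2uc hheat
      ρ le_rfl hρ1.le hb2 t ht x hxρ
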